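/- arXiv:gr-qc/9610016 — 7 statements merged into one kernel-verified Lean document; each statement's English description precedes it below -/
import Mathlib

section
/- Let k be a natural number and let f, h : ℝ → ℝ both be C^k functions such that f(t) = h(t) for all t > 0 and f(t) = -h(t) for all t < 0. Then the l-th derivative of h vanishes at 0 for every l with 0 ≤ l ≤ k. -/
/-- On an open set, iterated derivatives of functions that agree on the set agree. -/
lemma iteratedDeriv_eqOn_of_isOpen (n : ℕ) {f g : ℝ → ℝ} {s : Set ℝ} (hs : IsOpen s)
    (hfg : Set.EqOn f g s) : Set.EqOn (iteratedDeriv n f) (iteratedDeriv n g) s := by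
  intro x hx
  rw [iteratedDeriv, iteratedDeriv,
    ← iteratedFDerivWithin_of_isOpen (f := f) n hs hx,
    ← iteratedFDerivWithin_of_isOpen (f := g) n hs hx,
    iteratedFDerivWithin_congr hfg hx]

/-- Lemma 1 (analytic core): if a `C^k` function `f` agrees with `h` for `t > 0`
and with `-h` for `t < 0`, where `h` is also `C^k`, then all derivatives of `h`
up to order `k` vanish at `0`. -/
theorem signature_change_derivatives_vanish (k : ℕ) (f h : ℝ → ℝ)
    (hf : ContDiff ℝ k f) (hh : ContDiff ℝ k h)
    (hpos : ∀ t : ℝ, 0 < t → f t = h t)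
    (hneg : ∀ t : ℝ, t < 0 → f t = -h t) :
    ∀ l : ℕ, l ≤ k → iteratedDeriv l h 0 = 0 := by
  intro l hl
  have hlk : (l : WithTop ℕ∞) ≤ k := by exact_mod_cast hl
  have cf : Continuous (iteratedDeriv l f) := hf.continuous_iteratedDeriv l hlk
  have ch : Continuous (iteratedDeriv l h) := hh.continuous_iteratedDeriv l hlk
  have hP : Set.EqOn (iteratedDeriv l f) (iteratedDeriv l h) (Set.Ioi 0) :=
    iteratedDeriv_eqOn_of_isOpen l isOpen_Ioi (fun t ht => hpos t ht)
  have hN : Set.EqOn (iteratedDeriv l f) (iteratedDeriv l (-h)) (Set.Iio 0) :=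
    iteratedDeriv_eqOn_of_isOpen l isOpen_Iio (fun t ht => hneg t ht)
  have e1 : iteratedDeriv l f 0 = iteratedDeriv l h 0 := by
    have t1 : Filter.Tendsto (iteratedDeriv l f) (nhdsWithin 0 (Set.Ioi 0))
        (nhds (iteratedDeriv l f 0)) := (cf.tendsto 0).mono_left nhdsWithin_le_nhds
    have t2 : Filter.Tendsto (iteratedDeriv l f) (nhdsWithin 0 (Set.Ioi 0))
        (nhds (iteratedDeriv l h 0)) := by
      refine ((ch.tendsto 0).mono_left nhdsWithin_le_nhds).congr' ?_
      filter_upwards [self_mem_nhdsWithin] with t ht using (hP ht).symm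
    exact tendsto_nhds_unique t1 t2
  have e2 : iteratedDeriv l f 0 = -iteratedDeriv l h 0 := by
    have t1 : Filter.Tendsto (iteratedDeriv l f) (nhdsWithin 0 (Set.Iio 0))
        (nhds (iteratedDeriv l f 0)) := (cf.tendsto 0).mono_left nhdsWithin_le_nhds
    have t2 : Filter.Tendsto (iteratedDeriv l f) (nhdsWithin 0 (Set.Iio 0))
        (nhds (-iteratedDeriv l h 0)) := by
      refine (((ch.tendsto 0).neg).mono_left nhdsWithin_le_nhds).congr' ?_
      filter_upwards [self_mem_nhdsWithin] with t ht
      have : iteratedDeriv l (-h) t = -iteratedDeriv l h t :=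
        iteratedDeriv_neg l h t
      rw [hN ht, this]
    exact tendsto_nhds_unique t1 t2
  have : iteratedDeriv l h 0 = -iteratedDeriv l h 0 := e1 ▸ e2
  linarith
end

section
/- Let h : ℝ → ℝ be real analytic and let f : ℝ → ℝ be C^∞, and suppose f(t) = h(t) for all t > 0 and f(t) = -h(t) for all t < 0. Then h is identically zero on ℝ. -/
/-- Theorem 1 (analytic core): if a real analytic function `h` agrees with a
`C^∞` function `f` for `t > 0` and with `-f`-matching sign (`f = -h`) for
`t < 0`, then `h` vanishes identically. -/
theorem analytic_sign_flip_vanishes (h f : ℝ → ℝ)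
    (hh : ∀ x : ℝ, AnalyticAt ℝ h x)
    (hf : ContDiff ℝ (⊤ : ℕ∞) f)
    (hpos : ∀ t : ℝ, 0 < t → f t = h t)
    (hneg : ∀ t : ℝ, t < 0 → f t = -h t) :
    ∀ t : ℝ, h t = 0 := by
  have hhc : ContDiff ℝ (⊤ : ℕ∞) h := by
    rw [contDiff_iff_contDiffAt]
    exact fun x => (hh x).contDiffAt
  -- all iterated derivatives of h at 0 vanish
  have key : ∀ n : ℕ, iteratedDeriv n h 0 = 0 := by
    intro n
    have contf : Continuous (iteratedDeriv n f) := hf.continuous_iteratedDeriv n (by exact_mod_cast le_top)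
    have conth : Continuous (iteratedDeriv n h) := hhc.continuous_iteratedDeriv n (by exact_mod_cast le_top)
    -- equality on the right
    have hA : ∀ t : ℝ, 0 < t → iteratedDeriv n f t = iteratedDeriv n h t := by
      intro t ht
      have : f =ᶠ[nhds t] h := by
        filter_upwards [isOpen_Ioi.mem_nhds (show t ∈ Set.Ioi (0:ℝ) from ht)] with s hs
        exact hpos s hs
      exact this.iteratedDeriv_eq n
    have hB : ∀ t : ℝ, t < 0 → iteratedDeriv n f t = -iteratedDeriv n h t := by
      intro t ht
      have : f =ᶠ[nhds t] (fun s => -h s) := by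
        filter_upwards [isOpen_Iio.mem_nhds (show t ∈ Set.Iio (0:ℝ) from ht)] with s hs
        exact hneg s hs
      rw [this.iteratedDeriv_eq n, show (fun s => -h s) = -h from rfl, iteratedDeriv_neg]
    have hev1 : iteratedDeriv n f 0 = iteratedDeriv n h 0 := by
      have t1 : Filter.Tendsto (iteratedDeriv n f) (nhdsWithin 0 (Set.Ioi 0))
          (nhds (iteratedDeriv n f 0)) :=
        (contf.tendsto 0).mono_left nhdsWithin_le_nhds
      have t2 : Filter.Tendsto (iteratedDeriv n f) (nhdsWithin 0 (Set.Ioi 0))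
          (nhds (iteratedDeriv n h 0)) := by
        have t2' : Filter.Tendsto (iteratedDeriv n h) (nhdsWithin 0 (Set.Ioi 0))
            (nhds (iteratedDeriv n h 0)) :=
          (conth.tendsto 0).mono_left nhdsWithin_le_nhds
        refine t2'.congr' ?_
        filter_upwards [self_mem_nhdsWithin] with s hs
        exact (hA s hs).symm
      exact tendsto_nhds_unique t1 t2
    have hev2 : iteratedDeriv n f 0 = -iteratedDeriv n h 0 := by
      have t1 : Filter.Tendsto (iteratedDeriv n f) (nhdsWithin 0 (Set.Iio 0))
          (nhds (iteratedDeriv n f 0)) :=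
        (contf.tendsto 0).mono_left nhdsWithin_le_nhds
      have t2 : Filter.Tendsto (iteratedDeriv n f) (nhdsWithin 0 (Set.Iio 0))
          (nhds (-iteratedDeriv n h 0)) := by
        have t2' : Filter.Tendsto (fun s => -iteratedDeriv n h s) (nhdsWithin 0 (Set.Iio 0))
            (nhds (-iteratedDeriv n h 0)) :=
          ((conth.neg).tendsto 0).mono_left nhdsWithin_le_nhds
        refine t2'.congr' ?_
        filter_upwards [self_mem_nhdsWithin] with s hs
        exact (hB s hs).symm
      exact tendsto_nhds_unique t1 t2
    have : iteratedDeriv n h 0 = -iteratedDeriv n h 0 := hev1 ▸ hev2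
    linarith
  -- hence h vanishes near 0
  have hev : h =ᶠ[nhds 0] 0 := by
    obtain ⟨p, hp⟩ := hh 0
    obtain ⟨r, hr⟩ := hp
    have hr0 := hr.r_pos
    have hball : ∀ y : ℝ, y ∈ Metric.eball (0:ℝ) r → h y = 0 := by
      intro y hy
      have hsum := hr.hasSum_iteratedFDeriv (y := y) (by simpa [edist_zero_right] using hy)
      have hz : ∀ n : ℕ, ((n.factorial : ℝ)⁻¹ • iteratedFDeriv ℝ n h 0 fun _ => y) = 0 := by
        intro n
        rw [iteratedFDeriv_apply_eq_iteratedDeriv_mul_prod, key n]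
        simp
      have : HasSum (fun n : ℕ => (0:ℝ)) (h (0 + y)) := by
        refine hsum.congr_fun ?_
        intro n; rw [hz n]
      have h0 : h (0 + y) = 0 := this.unique hasSum_zero
      simpa using h0
    filter_upwards [Metric.eball_mem_nhds (0:ℝ) hr0] with y hy
    exact hball y hy
  -- identity theorem
  have hA : AnalyticOnNhd ℝ h Set.univ := fun x _ => hh x
  intro t
  exact hA.eqOn_zero_of_preconnected_of_eventuallyEq_zero isPreconnected_univ
    (Set.mem_univ 0) hev (Set.mem_univ t)
end

section
/- Let J ⊆ ℝ be an interval with 0 ∈ J and let c₁, c₂, c₃ : J → ℝ be differentiable functions satisfying ċᵢ = −(1/2)(c₁+c₂+c₃)·cᵢ on J, with initial values ĉᵢ = cᵢ(0). Then for all t ∈ J one has 2 + t(ĉ₁+ĉ₂+ĉ₃) > 0 and cᵢ(t) = 2ĉᵢ/(2 + t(ĉ₁+ĉ₂+ĉ₃)) for i = 1,2,3. -/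
open Set

/-- Uniqueness on `[0, β]` assuming the denominator stays positive there. -/
lemma uniq_on_Icc (S : ℝ → ℝ) (J : Set ℝ) (β : ℝ) (hβ : 0 ≤ β)
    (hsub : Set.Icc 0 β ⊆ J)
    (hS : ∀ t ∈ J, HasDerivWithinAt S (-(1/2) * (S t)^2) J t)
    (hden : ∀ t ∈ Set.Icc 0 β, 0 < 2 + t * S 0) :
    ∀ t ∈ Set.Icc 0 β, S t = 2 * S 0 / (2 + t * S 0) := by
  set ψ : ℝ → ℝ := fun t => 2 * S 0 / (2 + t * S 0) with hψ
  have hcS : ContinuousOn S (Icc 0 β) := fun t ht =>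
    ((hS t (hsub ht)).continuousWithinAt).mono hsub
  have hcψ : ContinuousOn ψ (Icc 0 β) := by
    apply ContinuousOn.div continuousOn_const
    · fun_prop
    · exact fun t ht => (hden t ht).ne'
  set A : ℝ → ℝ := fun t => (1/2) * (S t + ψ t) with hA
  have hcA : ContinuousOn A (Icc 0 β) := (continuousOn_const.mul (hcS.add hcψ))
  obtain ⟨C, hC⟩ := isCompact_Icc.exists_bound_of_continuousOn hcA
  have hC0 : 0 ≤ C := le_trans (norm_nonneg _) (hC 0 ⟨le_rfl, hβ⟩)
  set proj : ℝ → ℝ := fun t => max 0 (min t β) with hproj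
  have hprojmem : ∀ t, proj t ∈ Icc 0 β := fun t =>
    ⟨le_max_left _ _, max_le hβ (min_le_right _ _)⟩
  have hprojid : ∀ t ∈ Icc 0 β, proj t = t := by
    intro t ht
    simp [hproj, min_eq_left ht.2, max_eq_right ht.1]
  set v : ℝ → ℝ → ℝ := fun t x =>
    -(A (proj t)) * x + (1/2) * (S (proj t) * ψ (proj t)) with hv_def
  have hψder : ∀ t ∈ Icc 0 β, HasDerivAt ψ (-(1/2) * (ψ t)^2) t := by
    intro t ht
    have hne : 2 + t * S 0 ≠ 0 := (hden t ht).ne'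
    have hd : HasDerivAt (fun u : ℝ => 2 + u * S 0) (S 0) t := by
      simpa using ((hasDerivAt_id t).mul_const (S 0)).const_add 2
    have := (hasDerivAt_const t (2 * S 0)).div hd hne
    refine this.congr_deriv (Eq.symm ?_)
    rw [hψ]
    field_simp
    ring
  have hK : (C.toNNReal : ℝ) = C := Real.coe_toNNReal C hC0
  have hv : ∀ t, LipschitzOnWith C.toNNReal (v t) univ := by
    intro t
    rw [lipschitzOnWith_iff_dist_le_mul]
    intro x _ y _
    rw [Real.dist_eq, Real.dist_eq]
    have : v t x - v t y = -(A (proj t)) * (x - y) := by rw [hv_def]; ring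
    rw [this, abs_mul, abs_neg, hK]
    exact mul_le_mul_of_nonneg_right (hC _ (hprojmem t)) (abs_nonneg _)
  have key := ODE_solution_unique_of_mem_Icc_right (v := v) (s := fun _ => (univ : Set ℝ))
      (K := C.toNNReal) (f := S) (g := ψ) (a := 0) (b := β) (fun t _ => hv t) hcS
      (fun t ht => by
        have h1 : HasDerivWithinAt S (-(1/2) * (S t)^2) (Icc 0 β) t :=
          (hS t (hsub (Ico_subset_Icc_self ht))).mono hsub
        have h2 := h1.mono_of_mem_nhdsWithin (Icc_mem_nhdsGE_of_mem ht)
        convert h2 using 1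
        simp only [hv_def, hprojid t (Ico_subset_Icc_self ht), hA]
        ring)
      (fun t _ => mem_univ _) hcψ
      (fun t ht => by
        have h1 := ((hψder t (Ico_subset_Icc_self ht)).hasDerivWithinAt
          (s := Ici t))
        convert h1 using 1
        simp only [hv_def, hprojid t (Ico_subset_Icc_self ht), hA]
        ring)
      (fun t _ => mem_univ _)
      (by rw [hψ]; norm_num)
  exact fun t ht => key ht

/-- The key blow-up avoidance and explicit solution for `t ≥ 0`. -/
lemma key_lemma (S : ℝ → ℝ) (J : Set ℝ) (hJ : J.OrdConnected) (h0 : (0:ℝ) ∈ J)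
    (hS : ∀ t ∈ J, HasDerivWithinAt S (-(1/2) * (S t)^2) J t) :
    ∀ b ∈ J, 0 ≤ b → 0 < 2 + b * S 0 ∧ S b = 2 * S 0 / (2 + b * S 0) := by
  intro b hb hb0
  have hsub : Icc 0 b ⊆ J := hJ.out h0 hb
  by_cases hS0 : 0 ≤ S 0
  · have hden : ∀ t ∈ Icc 0 b, 0 < 2 + t * S 0 := by
      intro t ht
      nlinarith [ht.1, mul_nonneg ht.1 hS0]
    exact ⟨hden b ⟨hb0, le_rfl⟩, uniq_on_Icc S J b hb0 hsub hS hden b ⟨hb0, le_rfl⟩⟩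
  · push_neg at hS0
    have hnegS : 0 < -S 0 := by linarith
    set T : ℝ := 2 / (-S 0) with hT_def
    have hT : 0 < T := div_pos two_pos hnegS
    have hTS : T * (-S 0) = 2 := div_mul_cancel₀ 2 hnegS.ne'
    have hcS : ContinuousOn S (Icc 0 b) := fun t ht =>
      ((hS t (hsub ht)).continuousWithinAt).mono hsub
    obtain ⟨M, hM⟩ := isCompact_Icc.exists_bound_of_continuousOn hcS
    have hM0 : 0 ≤ M := le_trans (norm_nonneg _) (hM 0 ⟨le_rfl, hb0⟩)
    have hbT : b < T := by
      by_contra hcon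
      push_neg at hcon
      set δ : ℝ := min (T/2) (2/(M+1)) with hδ_def
      have hδpos : 0 < δ := lt_min (by linarith) (div_pos two_pos (by linarith))
      have hδT : δ ≤ T/2 := min_le_left _ _
      have hδM : δ ≤ 2/(M+1) := min_le_right _ _
      set β : ℝ := T - δ with hβ_def
      have hβ0 : 0 ≤ β := by simp only [hβ_def]; linarith
      have hβb : β ≤ b := by simp only [hβ_def]; linarith [hδpos]
      have hsubβ : Icc 0 β ⊆ J := fun x hx => hsub ⟨hx.1, le_trans hx.2 hβb⟩
      have hdenβ : ∀ t ∈ Icc 0 β, 0 < 2 + t * S 0 := by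
        intro t ht
        have h1 : t ≤ β := ht.2
        nlinarith [mul_le_mul_of_nonneg_right h1 hnegS.le]
      have heq := uniq_on_Icc S J β hβ0 hsubβ hS hdenβ β ⟨hβ0, le_rfl⟩
      have hden_val : 2 + β * S 0 = δ * (-S 0) := by
        simp only [hβ_def]; nlinarith
      have hSβ : S β = -2/δ := by
        rw [heq, hden_val]
        rw [div_eq_div_iff (by positivity) hδpos.ne']
        ring
      have hMβ : |S β| ≤ M := hM β ⟨hβ0, hβb⟩
      rw [hSβ, abs_div, abs_neg] at hMβ
      have h2δ : 2/δ ≤ M := by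
        have : |(2:ℝ)| = 2 := abs_of_nonneg two_pos.le
        rw [this, abs_of_pos hδpos] at hMβ
        exact hMβ
      have hM1 : (0:ℝ) < M + 1 := by linarith
      have hδle : δ * (M+1) ≤ 2 := by
        rw [le_div_iff₀ hM1] at hδM; linarith
      have : M + 1 ≤ 2/δ := by
        rw [le_div_iff₀ hδpos]; linarith
      linarith
    have hden : ∀ t ∈ Icc 0 b, 0 < 2 + t * S 0 := by
      intro t ht
      have : t < T := lt_of_le_of_lt ht.2 hbT
      nlinarith [mul_lt_mul_of_pos_right this hnegS]
    exact ⟨hden b ⟨hb0, le_rfl⟩, uniq_on_Icc S J b hb0 hsub hS hden b ⟨hb0, le_rfl⟩⟩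

/-- If `u ↦ c u * (2 + u * a)` has zero derivative within an order-connected set
containing `0`, it is constant. -/
lemma lin_const (J : Set ℝ) (hJ : J.OrdConnected) (h0 : (0:ℝ) ∈ J) (w : ℝ → ℝ)
    (hc : ∀ t ∈ J, HasDerivWithinAt w 0 J t) :
    ∀ t ∈ J, w t = w 0 := by
  intro t ht
  rcases le_total 0 t with h | h
  · have hsub : Icc 0 t ⊆ J := hJ.out h0 ht
    have hcont : ContinuousOn w (Icc 0 t) := fun u hu =>
      ((hc u (hsub hu)).continuousWithinAt).mono hsub
    have hder : ∀ u ∈ Ico 0 t, HasDerivWithinAt w 0 (Ici u) u := fun u hu =>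
      ((hc u (hsub (Ico_subset_Icc_self hu))).mono hsub).mono_of_mem_nhdsWithin
        (Icc_mem_nhdsGE_of_mem hu)
    exact constant_of_has_deriv_right_zero hcont hder t ⟨h, le_rfl⟩
  · have hsub : Icc t 0 ⊆ J := hJ.out ht h0
    have hcont : ContinuousOn w (Icc t 0) := fun u hu =>
      ((hc u (hsub hu)).continuousWithinAt).mono hsub
    have hder : ∀ u ∈ Ico t 0, HasDerivWithinAt w 0 (Ici u) u := fun u hu =>
      ((hc u (hsub (Ico_subset_Icc_self hu))).mono hsub).mono_of_mem_nhdsWithin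
        (Icc_mem_nhdsGE_of_mem hu)
    exact (constant_of_has_deriv_right_zero hcont hder 0 ⟨h, le_rfl⟩).symm

/-- Part (iii) of Theorem 2 (t20): the eigenvalues `cᵢ` of `g^{ij}∂ₜg_{jk}` of a
vacuum solution satisfy `ċᵢ = -(1/2)(c₁+c₂+c₃)·cᵢ`, hence are given explicitly by
`cᵢ(t) = 2·ĉᵢ/(2 + t·(ĉ₁+ĉ₂+ĉ₃))` where `ĉᵢ = cᵢ(0)`, and `2 + t·(ĉ₁+ĉ₂+ĉ₃) > 0`. -/
theorem vacuum_eigenvalue_solution (J : Set ℝ) (hJ : J.OrdConnected) (h0 : (0 : ℝ) ∈ J)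
    (c₁ c₂ c₃ : ℝ → ℝ)
    (h1 : ∀ t ∈ J,
      HasDerivWithinAt c₁ (-(1/2) * (c₁ t + c₂ t + c₃ t) * c₁ t) J t)
    (h2 : ∀ t ∈ J,
      HasDerivWithinAt c₂ (-(1/2) * (c₁ t + c₂ t + c₃ t) * c₂ t) J t)
    (h3 : ∀ t ∈ J,
      HasDerivWithinAt c₃ (-(1/2) * (c₁ t + c₂ t + c₃ t) * c₃ t) J t) :
    ∀ t ∈ J, 0 < 2 + t * (c₁ 0 + c₂ 0 + c₃ 0) ∧
      c₁ t = 2 * c₁ 0 / (2 + t * (c₁ 0 + c₂ 0 + c₃ 0)) ∧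
      c₂ t = 2 * c₂ 0 / (2 + t * (c₁ 0 + c₂ 0 + c₃ 0)) ∧
      c₃ t = 2 * c₃ 0 / (2 + t * (c₁ 0 + c₂ 0 + c₃ 0)) := by
  set S : ℝ → ℝ := fun t => c₁ t + c₂ t + c₃ t with hS_def
  have hS : ∀ t ∈ J, HasDerivWithinAt S (-(1/2) * (S t)^2) J t := by
    intro t ht
    have := ((h1 t ht).add (h2 t ht)).add (h3 t ht)
    refine this.congr_deriv (Eq.symm ?_)
    simp only [hS_def]
    ring
  -- the sum satisfies the explicit formula on all of J
  have hSall : ∀ t ∈ J, 0 < 2 + t * S 0 ∧ S t = 2 * S 0 / (2 + t * S 0) := by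
    intro t ht
    rcases le_or_gt 0 t with h | h
    · exact key_lemma S J hJ h0 hS t ht h
    · set J' : Set ℝ := {x : ℝ | -x ∈ J} with hJ'_def
      have hJ' : J'.OrdConnected := by
        constructor
        intro x hx y hy z hz
        have : -z ∈ Icc (-y) (-x) := ⟨neg_le_neg hz.2, neg_le_neg hz.1⟩
        exact hJ.out hy hx this
      have h0' : (0:ℝ) ∈ J' := by simpa [hJ'_def] using h0
      set U : ℝ → ℝ := fun x => -S (-x) with hU_def
      have hU : ∀ x ∈ J', HasDerivWithinAt U (-(1/2) * (U x)^2) J' x := by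
        intro x hx
        have hneg : HasDerivWithinAt (fun y : ℝ => -y) (-1) J' x :=
          (hasDerivAt_neg x).hasDerivWithinAt
        have hcomp := HasDerivWithinAt.comp x (hS (-x) hx) hneg
          (fun y (hy : y ∈ J') => hy)
        have := hcomp.neg
        refine this.congr_deriv (Eq.symm ?_)
        simp only [hU_def, Function.comp]
        ring
      have htJ' : -t ∈ J' := by simpa [hJ'_def] using ht
      obtain ⟨hpos, heq⟩ := key_lemma U J' hJ' h0' hU (-t) htJ' (by linarith)
      have hU0 : U 0 = -S 0 := by simp [hU_def]
      have hden : 2 + (-t) * U 0 = 2 + t * S 0 := by rw [hU0]; ring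
      constructor
      · rw [hden] at hpos; exact hpos
      · have : -S t = 2 * (-S 0) / (2 + t * S 0) := by
          rw [← hU0, ← hden]
          simpa [hU_def] using heq
        have hne : 2 + t * S 0 ≠ 0 := by rw [← hden]; rw [hden]; rw [hden] at hpos; exact hpos.ne'
        field_simp at this ⊢
        linarith
  intro t ht
  obtain ⟨hpos, hSt⟩ := hSall t ht
  have hne : 2 + t * S 0 ≠ 0 := hpos.ne'
  have hmul : S t * (2 + t * S 0) = 2 * S 0 := by
    rw [hSt, div_mul_cancel₀ _ hne]
  have main : ∀ c : ℝ → ℝ, (∀ u ∈ J, HasDerivWithinAt c (-(1/2) * S u * c u) J u) →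
      c t = 2 * c 0 / (2 + t * S 0) := by
    intro c hc
    have hw : ∀ u ∈ J, HasDerivWithinAt (fun u => c u * (2 + u * S 0)) 0 J u := by
      intro u hu
      obtain ⟨hposu, hSu⟩ := hSall u hu
      have hmulu : S u * (2 + u * S 0) = 2 * S 0 := by
        rw [hSu, div_mul_cancel₀ _ hposu.ne']
      have hlin : HasDerivWithinAt (fun x : ℝ => 2 + x * S 0) (S 0) J u := by
        simpa using (((hasDerivAt_id u).mul_const (S 0)).const_add 2).hasDerivWithinAt
      have := (hc u hu).mul hlin
      refine this.congr_deriv (Eq.symm ?_)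
      linear_combination (1/2 * c u) * hmulu
    have hconst := lin_const J hJ h0 _ hw t ht
    rw [eq_div_iff hne]
    nlinarith [hconst]
  exact ⟨hpos,
    main c₁ (fun u hu => h1 u hu),
    main c₂ (fun u hu => h2 u hu),
    main c₃ (fun u hu => h3 u hu)⟩
end

section
/- Let J ⊆ ℝ be an interval with 0 ∈ J and let c₁, c₂, c₃ : J → ℝ be differentiable functions satisfying ċᵢ = −(1/2)α·cᵢ + (1/8)E on J, where α = c₁+c₂+c₃ and E = α² − (c₁²+c₂²+c₃²). If c₁c₂ + c₂c₃ + c₃c₁ vanishes at t = 0, then c₁c₂ + c₂c₃ + c₃c₁ vanishes identically on J. -/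
/-- Part (iv) of Theorem 2 (t20): the vacuum condition
`c₁c₂ + c₂c₃ + c₃c₁ = 0` at `t = 0` is propagated in time by the eigenvalue
system `ċᵢ = -(1/2)·α·cᵢ + (1/8)·E` (with `α = c₁+c₂+c₃`,
`E = α² - (c₁²+c₂²+c₃²) = 2(c₁c₂+c₂c₃+c₃c₁)`). -/
theorem vacuum_condition_propagates (J : Set ℝ) (hJ : J.OrdConnected) (h0 : (0 : ℝ) ∈ J)
    (c₁ c₂ c₃ α E : ℝ → ℝ)
    (hα : ∀ t : ℝ, α t = c₁ t + c₂ t + c₃ t)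
    (hE : ∀ t : ℝ, E t = (α t) ^ 2 - ((c₁ t) ^ 2 + (c₂ t) ^ 2 + (c₃ t) ^ 2))
    (h1 : ∀ t ∈ J, HasDerivWithinAt c₁ (-(1/2) * α t * c₁ t + (1/8) * E t) J t)
    (h2 : ∀ t ∈ J, HasDerivWithinAt c₂ (-(1/2) * α t * c₂ t + (1/8) * E t) J t)
    (h3 : ∀ t ∈ J, HasDerivWithinAt c₃ (-(1/2) * α t * c₃ t + (1/8) * E t) J t)
    (hinit : c₁ 0 * c₂ 0 + c₂ 0 * c₃ 0 + c₃ 0 * c₁ 0 = 0) :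
    ∀ t ∈ J, c₁ t * c₂ t + c₂ t * c₃ t + c₃ t * c₁ t = 0 := by
  set S : ℝ → ℝ := fun t => c₁ t * c₂ t + c₂ t * c₃ t + c₃ t * c₁ t with hS
  -- derivative of S within J
  have hSder : ∀ t ∈ J, HasDerivWithinAt S (-(1/2) * α t * S t) J t := by
    intro t ht
    have h := (((h1 t ht).mul (h2 t ht)).add ((h2 t ht).mul (h3 t ht))).add
      ((h3 t ht).mul (h1 t ht))
    convert h using 1
    · rfl
    · rfl
    · rfl
    simp only [hS]
    rw [hα t, hE t, hα t]
    ring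
  -- continuity of α on J
  have hc1 : ContinuousOn c₁ J := fun t ht => (h1 t ht).continuousWithinAt
  have hc2 : ContinuousOn c₂ J := fun t ht => (h2 t ht).continuousWithinAt
  have hc3 : ContinuousOn c₃ J := fun t ht => (h3 t ht).continuousWithinAt
  have hαc : ContinuousOn α J := by
    have : ContinuousOn (fun t => c₁ t + c₂ t + c₃ t) J := (hc1.add hc2).add hc3
    exact this.congr fun t _ => hα t
  intro t ht
  -- work on the closed interval between 0 and t
  set a : ℝ := 0 ⊓ t with ha
  set b : ℝ := 0 ⊔ t with hb
  have hab : a ≤ b := inf_le_sup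
  have hI : Set.Icc a b ⊆ J := hJ.uIcc_subset h0 ht
  have h0I : (0 : ℝ) ∈ Set.Icc a b := Set.left_mem_uIcc
  have htI : t ∈ Set.Icc a b := Set.right_mem_uIcc
  -- continuous extension of α to ℝ
  set β : ℝ → ℝ := Set.IccExtend hab ((Set.Icc a b).restrict α) with hβdef
  have hβc : Continuous β := ((hαc.mono hI).restrict).Icc_extend'
  have hβ : ∀ u ∈ Set.Icc a b, β u = α u := fun u hu => Set.IccExtend_of_mem hab _ hu
  -- antiderivative of β
  set A : ℝ → ℝ := fun u => ∫ s in (0:ℝ)..u, β s with hA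
  have hAder : ∀ u : ℝ, HasDerivAt A (β u) u := fun u =>
    (hβc.integral_hasStrictDerivAt 0 u).hasDerivAt
  -- the integrating factor
  set φ : ℝ → ℝ := fun u => S u * Real.exp ((1/2) * A u) with hφ
  have hφder : ∀ u ∈ Set.Icc a b, HasDerivWithinAt φ 0 (Set.Icc a b) u := by
    intro u hu
    have hexp : HasDerivWithinAt (fun u => Real.exp ((1/2) * A u))
        (Real.exp ((1/2) * A u) * ((1/2) * β u)) (Set.Icc a b) u :=
      (((hAder u).const_mul (1/2 : ℝ)).exp).hasDerivWithinAt
    have h := ((hSder u (hI hu)).mono hI).mul hexp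
    convert h using 1
    · rfl
    · rfl
    · rfl
    rw [hβ u hu]
    ring
  -- φ is constant on Icc a b
  have hconst : ‖φ t - φ 0‖ ≤ 0 * ‖t - 0‖ :=
    (convex_Icc a b).norm_image_sub_le_of_norm_hasDerivWithin_le
      (fun x hx => hφder x hx) (fun x _ => le_of_eq norm_zero) h0I htI
  have hφt : φ t = φ 0 := by
    rw [zero_mul] at hconst
    have := le_antisymm hconst (norm_nonneg _)
    exact sub_eq_zero.mp (norm_eq_zero.mp this)
  have hφ0 : φ 0 = 0 := by simp [hφ, hS, hinit]
  have hφt0 : S t * Real.exp ((1/2) * A t) = 0 := hφt.trans hφ0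
  rcases mul_eq_zero.mp hφt0 with h | h
  · exact h
  · exact absurd h (Real.exp_ne_zero _)
end

section
/- Let ĉ₁, ĉ₂, ĉ₃ be real numbers with ĉ₁ĉ₂ + ĉ₂ĉ₃ + ĉ₃ĉ₁ = 0, and suppose there exist nonnegative reals f, g, h with ĉ₂ + ĉ₃ = f², ĉ₃ + ĉ₁ = g², ĉ₁ + ĉ₂ = h². Then g = f + h, or f = g + h, or h = f + g. -/
/-- In the proof of Theorem 3 (t22): if the eigenvalues `ĉᵢ` satisfy the vacuum
condition `ĉ₁ĉ₂ + ĉ₂ĉ₃ + ĉ₃ĉ₁ = 0` and their pairwise sums are squares of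
nonnegative reals `f, g, h`, then `f, g, h` form a degenerate triangle:
one of them is the sum of the other two. -/
theorem degenerate_triangle_relation (c₁ c₂ c₃ f g h : ℝ)
    (hf : 0 ≤ f) (hg : 0 ≤ g) (hh : 0 ≤ h)
    (hvac : c₁ * c₂ + c₂ * c₃ + c₃ * c₁ = 0)
    (h1 : c₂ + c₃ = f ^ 2) (h2 : c₃ + c₁ = g ^ 2) (h3 : c₁ + c₂ = h ^ 2) :
    g = f + h ∨ f = g + h ∨ h = f + g := by
  have hc1 : c₁ = (g^2 + h^2 - f^2)/2 := by linarith
  have hc2 : c₂ = (h^2 + f^2 - g^2)/2 := by linarith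
  have hc3 : c₃ = (f^2 + g^2 - h^2)/2 := by linarith
  have hprod : (f+g+h)*(-f+g+h)*(f-g+h)*(f+g-h) = 0 := by
    subst hc1 hc2 hc3
    nlinarith [hvac]
  rcases mul_eq_zero.mp hprod with hp | hp
  · rcases mul_eq_zero.mp hp with hp | hp
    · rcases mul_eq_zero.mp hp with hp | hp
      · -- f+g+h = 0, all zero
        left; nlinarith
      · right; left; linarith
    · left; linarith
  · right; right; linarith
end

section
/- Let Λ ∈ ℝ and let ε, S, Q : ℝ → ℝ be functions that are continuous at 0, such that 8πε(t) = (1/2)S(t) − Λ + (1/8)Q(t) for all t > 0 and 8πε(t) = −(1/2)S(t) + Λ + (1/8)Q(t) for all t < 0. Then S(0) = 2Λ. -/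
open Real

/-- Necessary direction of Theorem 4 (t25): if the tt-Einstein equation
`8πε = (η/2)S - ηΛ + (1/8)Q` holds with `η = -1` for `t > 0` (Lorentzian side)
and `η = +1` for `t < 0` (Riemannian side), and `ε, S, Q` are continuous at the
hypersurface `t = 0`, then the scalar curvature there satisfies `S(0) = 2Λ`. -/
theorem scalar_curvature_at_signature_change (Λ : ℝ) (ε S Q : ℝ → ℝ)
    (hε : ContinuousAt ε 0) (hS : ContinuousAt S 0) (hQ : ContinuousAt Q 0)
    (hpos : ∀ t : ℝ, 0 < t →
      8 * π * ε t = (1/2) * S t - Λ + (1/8) * Q t)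
    (hneg : ∀ t : ℝ, t < 0 →
      8 * π * ε t = -(1/2) * S t + Λ + (1/8) * Q t) :
    S 0 = 2 * Λ := by
  have hf : ContinuousAt (fun t => 8 * π * ε t - ((1/2) * S t - Λ + (1/8) * Q t)) 0 := by
    fun_prop
  have hg : ContinuousAt (fun t => 8 * π * ε t - (-(1/2) * S t + Λ + (1/8) * Q t)) 0 := by
    fun_prop
  have h1 : 8 * π * ε 0 - ((1/2) * S 0 - Λ + (1/8) * Q 0) = 0 := by
    have := tendsto_nhds_unique
      (hf.continuousWithinAt (s := Set.Ioi 0))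
      ((tendsto_const_nhds (x := (0:ℝ))).congr' (by
        filter_upwards [self_mem_nhdsWithin] with t ht
        linarith [hpos t ht]))
    linarith [this]
  have h2 : 8 * π * ε 0 - (-(1/2) * S 0 + Λ + (1/8) * Q 0) = 0 := by
    have := tendsto_nhds_unique
      (hg.continuousWithinAt (s := Set.Iio 0))
      ((tendsto_const_nhds (x := (0:ℝ))).congr' (by
        filter_upwards [self_mem_nhdsWithin] with t ht
        linarith [hneg t ht]))
    linarith [this]
  linarith
end

section
/- Let Λ ∈ ℝ and let ε̃, S, Q : ℝ → ℝ be functions that are continuous at 0, such that 8πε̃(t) = (1/2)S(t) − Λ + (1/8)Q(t) for all t > 0 and 8πε̃(t) = (1/2)S(t) − Λ − (1/8)Q(t) for all t < 0. Then Q(0) = 0. -/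
open Real

/-- Necessary direction of Theorem 6 (t40): if the tt-Einstein equation
multiplied by the signature factor, `8πηε = (1/2)S - Λ + (η/8)Q`, holds with
`η = +1` for `t > 0` and `η = -1` for `t < 0`, and the modified energy density
`ε̃ = ηε`, `S` and `Q` are continuous at `0`, then `Q(0) = 0`, i.e. the second
fundamental form `ĉ` of the hypersurface satisfies `(tr ĉ)² - |ĉ|² = 0`. -/
theorem second_fundamental_form_null_condition (Λ : ℝ) (εtilde S Q : ℝ → ℝ)
    (hε : ContinuousAt εtilde 0) (hS : ContinuousAt S 0) (hQ : ContinuousAt Q 0)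
    (hpos : ∀ t : ℝ, 0 < t →
      8 * π * εtilde t = (1/2) * S t - Λ + (1/8) * Q t)
    (hneg : ∀ t : ℝ, t < 0 →
      8 * π * εtilde t = (1/2) * S t - Λ - (1/8) * Q t) :
    Q 0 = 0 := by
  have hA : Filter.Tendsto (fun t => 8 * π * εtilde t) (nhds (0:ℝ))
      (nhds (8 * π * εtilde 0)) := (continuousAt_const.mul hε)
  have hBp : Filter.Tendsto (fun t => (1/2) * S t - Λ + (1/8) * Q t) (nhds (0:ℝ))
      (nhds ((1/2) * S 0 - Λ + (1/8) * Q 0)) :=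
    ((continuousAt_const.mul hS).sub continuousAt_const).add (continuousAt_const.mul hQ)
  have hBn : Filter.Tendsto (fun t => (1/2) * S t - Λ - (1/8) * Q t) (nhds (0:ℝ))
      (nhds ((1/2) * S 0 - Λ - (1/8) * Q 0)) :=
    ((continuousAt_const.mul hS).sub continuousAt_const).sub (continuousAt_const.mul hQ)
  have h1 : 8 * π * εtilde 0 = (1/2) * S 0 - Λ + (1/8) * Q 0 := by
    have ha : Filter.Tendsto (fun t => 8 * π * εtilde t) (nhdsWithin (0:ℝ) (Set.Ioi 0))
        (nhds (8 * π * εtilde 0)) := hA.mono_left nhdsWithin_le_nhds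
    have hb : Filter.Tendsto (fun t => (1/2) * S t - Λ + (1/8) * Q t)
        (nhdsWithin (0:ℝ) (Set.Ioi 0)) (nhds ((1/2) * S 0 - Λ + (1/8) * Q 0)) :=
      hBp.mono_left nhdsWithin_le_nhds
    have heq : (fun t => (1/2) * S t - Λ + (1/8) * Q t) =ᶠ[nhdsWithin (0:ℝ) (Set.Ioi 0)]
        (fun t => 8 * π * εtilde t) := by
      filter_upwards [self_mem_nhdsWithin] with t ht
      exact (hpos t ht).symm
    exact tendsto_nhds_unique ha (hb.congr' heq)
  have h2 : 8 * π * εtilde 0 = (1/2) * S 0 - Λ - (1/8) * Q 0 := by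
    have ha : Filter.Tendsto (fun t => 8 * π * εtilde t) (nhdsWithin (0:ℝ) (Set.Iio 0))
        (nhds (8 * π * εtilde 0)) := hA.mono_left nhdsWithin_le_nhds
    have hb : Filter.Tendsto (fun t => (1/2) * S t - Λ - (1/8) * Q t)
        (nhdsWithin (0:ℝ) (Set.Iio 0)) (nhds ((1/2) * S 0 - Λ - (1/8) * Q 0)) :=
      hBn.mono_left nhdsWithin_le_nhds
    have heq : (fun t => (1/2) * S t - Λ - (1/8) * Q t) =ᶠ[nhdsWithin (0:ℝ) (Set.Iio 0)]
        (fun t => 8 * π * εtilde t) := by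
      filter_upwards [self_mem_nhdsWithin] with t ht
      exact (hneg t ht).symm
    exact tendsto_nhds_unique ha (hb.congr' heq)
  linarith
end
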